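/- (Theorem 1, Mukhin's criterion, direction (B) ⇒ (A)). Under the setup below, suppose the local limit theorem holds: sup_{m ∈ ℤ} |ℙ(S_n = m) − (1/b_n)·g((m − a_n)/b_n)| = o(1/b_n) as n → ∞. Then for every sequence of positive integers (v_n) with v_n/b_n → 0 one has sup_{m ∈ ℤ} |ℙ(S_n = m + v_n) − ℙ(S_n = m)| = o(1/b_n) as n → ∞. -/
import Mathlib


open MeasureTheory Filter Topology

/-- Theorem 1, direction (B) ⇒ (A): the local limit theorem implies the
shift-equidistribution property along every sequence `v n = o(b n)`. -/
theorem mukhin_B_implies_A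
    {Ω : Type*} [MeasurableSpace Ω] (μ : Measure Ω) [IsProbabilityMeasure μ]
    (S : ℕ → Ω → ℤ) (hS : ∀ n, Measurable (S n))
    (a : ℕ → ℝ) (b : ℕ → ℝ) (hb : ∀ n, 0 < b n)
    (hbtop : Tendsto b atTop atTop)
    (g : ℝ → ℝ) (hg_nonneg : ∀ x, 0 ≤ g x) (hg_int : Integrable g)
    (hg_uc : UniformContinuous g) (hg_one : ∫ x, g x = 1)
    (G : ℝ → ℝ) (hG : ∀ x, G x = ∫ t in Set.Iic x, g t)
    (hweak : Tendsto (fun n => ⨆ x : ℝ,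
      |(μ {ω | (S n ω : ℝ) - a n < b n * x}).toReal - G x|) atTop (𝓝 0))
    (hLLT : ∀ η > (0 : ℝ), ∀ᶠ n in atTop, ∀ m : ℤ,
      |(μ {ω | S n ω = m}).toReal - (1 / b n) * g (((m : ℝ) - a n) / b n)| ≤
        η / b n) :
    ∀ v : ℕ → ℕ, (∀ n, 0 < v n) →
      Tendsto (fun n => (v n : ℝ) / b n) atTop (𝓝 0) →
      ∀ η > (0 : ℝ), ∀ᶠ n in atTop, ∀ m : ℤ,
        |(μ {ω | S n ω = m + (v n : ℤ)}).toReal - (μ {ω | S n ω = m}).toReal| ≤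
          η / b n := by
  intro v hv hvb η hη
  -- uniform continuity: pick δ
  obtain ⟨δ, hδ, hδg⟩ := Metric.uniformContinuous_iff.mp hg_uc (η / 3) (by linarith)
  have h1 := hLLT (η / 3) (by linarith)
  have h2 : ∀ᶠ n in atTop, (v n : ℝ) / b n < δ := by
    have := hvb.eventually (gt_mem_nhds (show (0:ℝ) < δ from hδ))
    filter_upwards [this] with n hn using hn
  filter_upwards [h1, h2] with n hn hvn m
  have hbn := hb n
  have hA := hn m
  have hB := hn (m + (v n : ℤ))
  -- distance between arguments
  have hdist : dist (((((m + (v n : ℤ)) : ℤ) : ℝ) - a n) / b n)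
      (((((m : ℤ) : ℝ) - a n)) / b n) < δ := by
    rw [Real.dist_eq]
    have : ((((m + (v n : ℤ)) : ℤ) : ℝ) - a n) / b n - (((m : ℤ) : ℝ) - a n) / b n
        = (v n : ℝ) / b n := by push_cast; ring
    rw [this, abs_of_nonneg (by positivity)]
    exact hvn
  have hgc : |g (((((m + (v n : ℤ)) : ℤ) : ℝ) - a n) / b n)
      - g ((((m : ℤ) : ℝ) - a n) / b n)| < η / 3 := by
    have := hδg hdist
    rwa [Real.dist_eq] at this
  have hbinv : (0:ℝ) < 1 / b n := by positivity
  have key : (1 / b n) * |g (((((m + (v n : ℤ)) : ℤ) : ℝ) - a n) / b n)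
      - g ((((m : ℤ) : ℝ) - a n) / b n)| ≤ (1 / b n) * (η / 3) :=
    mul_le_mul_of_nonneg_left hgc.le hbinv.le
  have habs : |(1 / b n) * g (((((m + (v n : ℤ)) : ℤ) : ℝ) - a n) / b n)
      - (1 / b n) * g ((((m : ℤ) : ℝ) - a n) / b n)| ≤ (1 / b n) * (η / 3) := by
    rw [← mul_sub, abs_mul, abs_of_pos hbinv]
    exact key
  have hfin : (1 / b n) * (η / 3) + (η / 3 / b n + η / 3 / b n) = η / b n := by
    field_simp; ring
  set P := (μ {ω | S n ω = m + (v n : ℤ)}).toReal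
  set Q := (μ {ω | S n ω = m}).toReal
  set p := (1 / b n) * g (((((m + (v n : ℤ)) : ℤ) : ℝ) - a n) / b n)
  set q := (1 / b n) * g ((((m : ℤ) : ℝ) - a n) / b n)
  have t1 := abs_sub_le P p Q
  have t2 := abs_sub_le p q Q
  have hA' : |q - Q| ≤ η / 3 / b n := by rw [abs_sub_comm]; exact hA
  linarith [hfin]
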